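/- Let p and q be odd prime numbers with p a quadratic non-residue modulo q (in particular p ≠ q). Then every type-I solution of level k satisfies q⁴ ≤ 4·p^k. -/

import Mathlib

/-- Let `p` and `q` be odd primes with `p` a quadratic non-residue
modulo `q`. Then every type-I solution of level `k` (i.e. a quadruple `(a,b,c,d)` of
integers with `a` odd, `2q ∣ b, c, d`, not all of `b, c, d` zero, and
`a² + b² + c² + d² = p^k`) satisfies `q⁴ ≤ 4·p^k`. -/
theorem lps_typeI_lower_bound_of_nonresidue
    (p q : ℕ) (hp : p.Prime) (hq : q.Prime) (hpodd : Odd p) (hqodd : Odd q)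
    (hnr : ¬ IsSquare ((p : ZMod q)))
    (k : ℕ) (a b c d : ℤ)
    (ha : Odd a)
    (hb : (2 * (q : ℤ)) ∣ b) (hc : (2 * (q : ℤ)) ∣ c) (hd : (2 * (q : ℤ)) ∣ d)
    (hne : ¬ (b = 0 ∧ c = 0 ∧ d = 0))
    (hsum : a ^ 2 + b ^ 2 + c ^ 2 + d ^ 2 = (p : ℤ) ^ k) :
    (q : ℤ) ^ 4 ≤ 4 * (p : ℤ) ^ k := by
  haveI : Fact q.Prime := ⟨hq⟩
  have hqZ : Prime (q : ℤ) := Nat.prime_iff_prime_int.mp hq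
  have hpq0 : (p : ZMod q) ≠ 0 := by
    intro h
    exact hnr (h ▸ IsSquare.zero)
  -- q does not divide p (as naturals / integers)
  have hqdp : ¬ (q : ℤ) ∣ (p : ℤ) := by
    intro h
    have hqp : q ∣ p := by exact_mod_cast h
    have : q = p := (Nat.prime_dvd_prime_iff_eq hq hp).mp hqp
    subst this
    exact hpq0 (ZMod.natCast_self q)
  have hbq : (q : ℤ) ∣ b := dvd_trans (dvd_mul_left _ _) hb
  have hcq : (q : ℤ) ∣ c := dvd_trans (dvd_mul_left _ _) hc
  have hdq : (q : ℤ) ∣ d := dvd_trans (dvd_mul_left _ _) hd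
  -- reduce the equation mod q
  have hcast : ((a : ZMod q)) ^ 2 = (p : ZMod q) ^ k := by
    have h := congrArg (fun z : ℤ => (z : ZMod q)) hsum
    push_cast at h
    have hbz : ((b : ZMod q)) = 0 := (ZMod.intCast_zmod_eq_zero_iff_dvd b q).mpr
      (by exact_mod_cast hbq)
    have hcz : ((c : ZMod q)) = 0 := (ZMod.intCast_zmod_eq_zero_iff_dvd c q).mpr
      (by exact_mod_cast hcq)
    have hdz : ((d : ZMod q)) = 0 := (ZMod.intCast_zmod_eq_zero_iff_dvd d q).mpr
      (by exact_mod_cast hdq)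
    rw [hbz, hcz, hdz] at h
    simpa using h
  -- k is even
  have hkeven : Even k := by
    rcases Nat.even_or_odd k with he | ho
    · exact he
    · exfalso
      obtain ⟨m, hm⟩ := ho
      have hu : ((p : ZMod q)) ^ m ≠ 0 := pow_ne_zero m hpq0
      apply hnr
      refine ⟨(a : ZMod q) * ((p : ZMod q) ^ m)⁻¹, ?_⟩
      have key : ((a : ZMod q)) ^ 2 = (p : ZMod q) * ((p : ZMod q) ^ m) ^ 2 := by
        rw [hcast, hm]; ring
      field_simp
      linear_combination -key
  obtain ⟨m, hm⟩ := hkeven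
  have hxpos : 0 < (p : ℤ) ^ m := pow_pos (by exact_mod_cast hp.pos) m
  set x : ℤ := (p : ℤ) ^ m with hx
  have hpk : ((p : ℤ)) ^ k = x ^ 2 := by rw [hm, hx]; ring
  -- the sum of the three squares is positive
  set s : ℤ := b ^ 2 + c ^ 2 + d ^ 2 with hs
  have hspos : 0 < s := by
    rcases lt_or_eq_of_le (by positivity : (0:ℤ) ≤ s) with h | h
    · exact h
    · exfalso
      apply hne
      have hb0 : b = 0 := by nlinarith [sq_nonneg b, sq_nonneg c, sq_nonneg d]
      have hc0 : c = 0 := by nlinarith [sq_nonneg b, sq_nonneg c, sq_nonneg d]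
      have hd0 : d = 0 := by nlinarith [sq_nonneg b, sq_nonneg c, sq_nonneg d]
      exact ⟨hb0, hc0, hd0⟩
  have haseq : a ^ 2 + s = x ^ 2 := by rw [← hpk, ← hsum, hs]; ring
  have ha2lt : a ^ 2 < x ^ 2 := by linarith
  have hax : -x < a ∧ a < x := by
    constructor <;> nlinarith [sq_nonneg (a - x), sq_nonneg (a + x)]
  -- q² divides (x - a)(x + a)
  have hq2s : (q : ℤ) ^ 2 ∣ (x - a) * (x + a) := by
    have h1 : ((2 * (q : ℤ)) ^ 2) ∣ s :=
      dvd_add (dvd_add (pow_dvd_pow_of_dvd hb 2) (pow_dvd_pow_of_dvd hc 2))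
        (pow_dvd_pow_of_dvd hd 2)
    have h2 : (q : ℤ) ^ 2 ∣ s := dvd_trans ⟨4, by ring⟩ h1
    have h3 : (x - a) * (x + a) = s := by linear_combination -haseq
    rwa [h3]
  -- q does not divide x
  have hqx : ¬ (q : ℤ) ∣ x := by
    intro h
    exact hqdp (hqZ.dvd_of_dvd_pow h)
  -- q divides at most one of x - a, x + a
  have hnotboth : ¬ ((q : ℤ) ∣ (x - a) ∧ (q : ℤ) ∣ (x + a)) := by
    rintro ⟨h1, h2⟩
    have h3 : (q : ℤ) ∣ 2 * x := by
      have h4 := dvd_add h1 h2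
      have h5 : x - a + (x + a) = 2 * x := by ring
      rwa [h5] at h4
    rcases hqZ.dvd_mul.mp h3 with h | h
    · have hq2 : q ∣ 2 := by exact_mod_cast h
      have : q = 2 := (Nat.prime_dvd_prime_iff_eq hq Nat.prime_two).mp hq2
      rw [this] at hqodd
      simp [Nat.odd_iff] at hqodd
    · exact hqx h
  have key : (q : ℤ) ^ 2 ≤ x - a ∨ (q : ℤ) ^ 2 ≤ x + a := by
    by_cases hdq1 : (q : ℤ) ∣ (x - a)
    · left
      have hnd : ¬ (q : ℤ) ∣ (x + a) := fun h => hnotboth ⟨hdq1, h⟩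
      have hco : IsCoprime ((q : ℤ) ^ 2) (x + a) :=
        ((hqZ.coprime_iff_not_dvd).mpr hnd).pow_left
      exact Int.le_of_dvd (by linarith [hax.2]) (hco.dvd_of_dvd_mul_right hq2s)
    · right
      have hco : IsCoprime ((q : ℤ) ^ 2) (x - a) :=
        ((hqZ.coprime_iff_not_dvd).mpr hdq1).pow_left
      exact Int.le_of_dvd (by linarith [hax.1]) (hco.dvd_of_dvd_mul_left hq2s)
  rw [hpk]
  rcases key with h | h
  · have h1 : -x + 1 ≤ a := Int.add_one_le_iff.mpr hax.1
    have hle : x - a ≤ 2 * x - 1 := by linarith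
    have h2 : ((q : ℤ) ^ 2) ^ 2 ≤ (2 * x - 1) ^ 2 :=
      pow_le_pow_left₀ (sq_nonneg _) (le_trans h hle) 2
    nlinarith [hxpos]
  · have h1 : a + 1 ≤ x := Int.add_one_le_iff.mpr hax.2
    have hle : x + a ≤ 2 * x - 1 := by linarith
    have h2 : ((q : ℤ) ^ 2) ^ 2 ≤ (2 * x - 1) ^ 2 :=
      pow_le_pow_left₀ (sq_nonneg _) (le_trans h hle) 2
    nlinarith [hxpos]
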